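/- For every positive integer ℓ and real 0 < x < 1, the identity 2·∑_{n=1}^∞ xⁿ ∑_{r,t ≥ 0, r+t < n, r ≤ n, t ≤ n} C(r+ℓ-1,ℓ-1)C(n-r+ℓ-1,ℓ-1)C(t+ℓ-1,ℓ-1)C(n-t+ℓ-1,ℓ-1) + ∑_{n=0}^∞ xⁿ ∑_{r=0}^n C(r+ℓ-1,ℓ-1)²C(n-r+ℓ-1,ℓ-1)² = ∑_{n=0}^∞ xⁿ · C(n+2ℓ-1, 2ℓ-1)² holds. -/

import Mathlib

open Finset PowerSeries

private lemma conv_choose_aux (a b n : ℕ) :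
    ∑ r ∈ Finset.range (n + 1), ((a + r).choose a : ℝ) * ((b + (n - r)).choose b : ℝ)
      = ((a + b + 1 + n).choose (a + b + 1) : ℝ) := by
  have h : (mk fun n => ((a + n).choose a : ℝ)) * (mk fun n => ((b + n).choose b : ℝ))
      = mk fun n => ((a + b + 1 + n).choose (a + b + 1) : ℝ) := by
    rw [← mk_one_pow_eq_mk_choose_add, ← mk_one_pow_eq_mk_choose_add,
      ← mk_one_pow_eq_mk_choose_add, ← pow_add]
    congr 1
    omega
  have h2 := congrArg (coeff n) h
  rw [coeff_mul, Finset.Nat.sum_antidiagonal_eq_sum_range_succ_mk] at h2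
  simpa using h2

/-- Chu–Vandermonde convolution in the needed form. -/
private lemma conv_choose (ℓ : ℕ) (hℓ : 1 ≤ ℓ) (n : ℕ) :
    ∑ r ∈ Finset.range (n + 1),
        ((r + ℓ - 1).choose (ℓ - 1) : ℝ) * (((n - r) + ℓ - 1).choose (ℓ - 1) : ℝ)
      = ((n + 2 * ℓ - 1).choose (2 * ℓ - 1) : ℝ) := by
  obtain ⟨a, rfl⟩ : ∃ a, ℓ = a + 1 := ⟨ℓ - 1, by omega⟩
  have e1 : ∀ r : ℕ, r + (a + 1) - 1 = a + r := fun r => by omega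
  have e2 : n + 2 * (a + 1) - 1 = a + a + 1 + n := by omega
  have e3 : 2 * (a + 1) - 1 = a + a + 1 := by omega
  simp only [e1, e2, e3, Nat.add_sub_cancel]
  exact conv_choose_aux a a n

private lemma termwise (ℓ : ℕ) (hℓ : 1 ≤ ℓ) (n : ℕ) :
    2 * (∑ r ∈ Finset.range (n + 1), ∑ t ∈ Finset.range (n + 1),
          (if r + t < n then
            (Nat.choose (r + ℓ - 1) (ℓ - 1) : ℝ) * Nat.choose (n - r + ℓ - 1) (ℓ - 1)
              * Nat.choose (t + ℓ - 1) (ℓ - 1) * Nat.choose (n - t + ℓ - 1) (ℓ - 1)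
          else 0))
      + ∑ r ∈ Finset.range (n + 1),
          (Nat.choose (r + ℓ - 1) (ℓ - 1) : ℝ) ^ 2 * (Nat.choose (n - r + ℓ - 1) (ℓ - 1) : ℝ) ^ 2
    = ((n + 2 * ℓ - 1).choose (2 * ℓ - 1) : ℝ) ^ 2 := by
  set f : ℕ → ℝ := fun r => ((r + ℓ - 1).choose (ℓ - 1) : ℝ) with hf
  set T : Finset (ℕ × ℕ) := Finset.range (n + 1) ×ˢ Finset.range (n + 1) with hT
  set g : ℕ × ℕ → ℝ := fun p => f p.1 * f (n - p.1) * f p.2 * f (n - p.2) with hg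
  -- full sum equals C²
  have hfull : ∑ p ∈ T, g p = ((n + 2 * ℓ - 1).choose (2 * ℓ - 1) : ℝ) ^ 2 := by
    rw [hT, Finset.sum_product, ← conv_choose ℓ hℓ n, sq, Finset.sum_mul]
    refine Finset.sum_congr rfl fun r _ => ?_
    rw [Finset.mul_sum]
    refine Finset.sum_congr rfl fun t _ => ?_
    simp only [hg]
    ring
  -- split
  have hsplit : ∑ p ∈ T, g p =
      (∑ p ∈ T with p.1 + p.2 < n, g p) + ((∑ p ∈ T with p.1 + p.2 = n, g p)
        + ∑ p ∈ T with n < p.1 + p.2, g p) := by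
    rw [← Finset.sum_filter_add_sum_filter_not T (fun p => p.1 + p.2 < n)]
    congr 1
    rw [← Finset.sum_filter_add_sum_filter_not (T.filter (fun p => ¬ p.1 + p.2 < n))
      (fun p => p.1 + p.2 = n), Finset.filter_filter, Finset.filter_filter]
    congr 1
    · apply Finset.sum_congr _ fun _ _ => rfl
      apply Finset.filter_congr
      intro p _
      omega
    · apply Finset.sum_congr _ fun _ _ => rfl
      apply Finset.filter_congr
      intro p _
      omega
  -- reflection: > part equals < part
  have hrefl : (∑ p ∈ T with n < p.1 + p.2, g p) = ∑ p ∈ T with p.1 + p.2 < n, g p := by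
    refine Finset.sum_nbij' (fun p => (n - p.1, n - p.2)) (fun p => (n - p.1, n - p.2))
      ?_ ?_ ?_ ?_ ?_
    · intro p hp
      simp only [hT, Finset.mem_filter, Finset.mem_product, Finset.mem_range] at hp ⊢
      omega
    · intro p hp
      simp only [hT, Finset.mem_filter, Finset.mem_product, Finset.mem_range] at hp ⊢
      omega
    · intro p hp
      simp only [hT, Finset.mem_filter, Finset.mem_product, Finset.mem_range] at hp
      have h1 : n - (n - p.1) = p.1 := by omega
      have h2 : n - (n - p.2) = p.2 := by omega
      simp [h1, h2]
    · intro p hp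
      simp only [hT, Finset.mem_filter, Finset.mem_product, Finset.mem_range] at hp
      have h1 : n - (n - p.1) = p.1 := by omega
      have h2 : n - (n - p.2) = p.2 := by omega
      simp [h1, h2]
    · intro p hp
      simp only [hT, Finset.mem_filter, Finset.mem_product, Finset.mem_range] at hp
      have h1 : n - (n - p.1) = p.1 := by omega
      have h2 : n - (n - p.2) = p.2 := by omega
      simp only [hg, h1, h2]
      ring
  -- diagonal part
  have hdiag : (∑ p ∈ T with p.1 + p.2 = n, g p)
      = ∑ r ∈ Finset.range (n + 1), f r ^ 2 * f (n - r) ^ 2 := by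
    refine (Finset.sum_nbij' (fun p => p.1) (fun r => (r, n - r)) ?_ ?_ ?_ ?_ ?_).symm.symm
    · intro p hp
      simp only [hT, Finset.mem_filter, Finset.mem_product, Finset.mem_range] at hp ⊢
      omega
    · intro r hr
      simp only [hT, Finset.mem_filter, Finset.mem_product, Finset.mem_range] at hr ⊢
      omega
    · intro p hp
      simp only [hT, Finset.mem_filter, Finset.mem_product, Finset.mem_range] at hp
      have : n - p.1 = p.2 := by omega
      simp [this]
    · intro r hr
      simp
    · intro p hp
      simp only [hT, Finset.mem_filter, Finset.mem_product, Finset.mem_range] at hp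
      have h1 : n - p.1 = p.2 := by omega
      have h2 : n - p.2 = p.1 := by omega
      simp only [hg, h1, h2]
      ring
  -- the if-sum is the filtered sum
  have hif : (∑ r ∈ Finset.range (n + 1), ∑ t ∈ Finset.range (n + 1),
        (if r + t < n then
            (Nat.choose (r + ℓ - 1) (ℓ - 1) : ℝ) * Nat.choose (n - r + ℓ - 1) (ℓ - 1)
              * Nat.choose (t + ℓ - 1) (ℓ - 1) * Nat.choose (n - t + ℓ - 1) (ℓ - 1)
          else 0)) = ∑ p ∈ T with p.1 + p.2 < n, g p := by
    rw [Finset.sum_filter, hT, Finset.sum_product]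
  rw [hif, ← hfull, hsplit, hrefl, hdiag]
  simp only [hf]
  ring

private lemma summable_aux (x : ℝ) (hx0 : 0 < x) (hx1 : x < 1) (m : ℕ) :
    Summable fun n : ℕ => ((n : ℝ) + 1) ^ m * x ^ n := by
  have h0 : ‖x‖ < 1 := by rw [Real.norm_eq_abs, abs_of_pos hx0]; exact hx1
  have h := summable_pow_mul_geometric_of_norm_lt_one (R := ℝ) m h0
  have h2 : Summable fun n : ℕ => ((n + 1 : ℕ) : ℝ) ^ m * x ^ (n + 1) :=
    h.comp_injective Nat.succ_injective
  have h3 : Summable fun n : ℕ => (1 / x) * (((n + 1 : ℕ) : ℝ) ^ m * x ^ (n + 1)) :=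
    h2.mul_left _
  refine h3.congr fun n => ?_
  push_cast
  field_simp
  ring

private lemma summable_rhs (ℓ : ℕ) (hℓ : 1 ≤ ℓ) (x : ℝ) (hx0 : 0 < x) (hx1 : x < 1) :
    Summable fun n : ℕ => x ^ n * (Nat.choose (n + 2 * ℓ - 1) (2 * ℓ - 1) : ℝ) ^ 2 := by
  refine Summable.of_nonneg_of_le (fun n => by positivity) (fun n => ?_)
    ((summable_aux x hx0 hx1 (2 * (2 * ℓ - 1))).mul_left ((2 * ℓ : ℝ) ^ (2 * (2 * ℓ - 1))))
  set K := 2 * ℓ - 1 with hK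
  have h1 : (n + 2 * ℓ - 1).choose K ≤ (2 * ℓ) ^ K * (n + 1) ^ K := by
    have hmul : n ≤ 2 * ℓ * n := Nat.le_mul_of_pos_left n (by omega)
    calc (n + 2 * ℓ - 1).choose K ≤ (n + 2 * ℓ - 1) ^ K := Nat.choose_le_pow _ _
      _ ≤ (2 * ℓ * (n + 1)) ^ K := by
          refine Nat.pow_le_pow_left ?_ _
          have hmul2 : 2 * ℓ * (n + 1) = 2 * ℓ * n + 2 * ℓ := by ring
          omega
      _ = (2 * ℓ) ^ K * (n + 1) ^ K := mul_pow _ _ _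
  have h1R : ((n + 2 * ℓ - 1).choose K : ℝ) ≤ (2 * ℓ : ℝ) ^ K * ((n : ℝ) + 1) ^ K := by
    have := (Nat.cast_le (α := ℝ)).mpr h1
    push_cast at this
    convert this using 2 <;> push_cast <;> ring
  have h2 : ((n + 2 * ℓ - 1).choose K : ℝ) ^ 2 ≤ ((2 * ℓ : ℝ) ^ K * ((n : ℝ) + 1) ^ K) ^ 2 :=
    pow_le_pow_left₀ (by positivity) h1R 2
  calc x ^ n * ((n + 2 * ℓ - 1).choose K : ℝ) ^ 2
      ≤ x ^ n * ((2 * ℓ : ℝ) ^ K * ((n : ℝ) + 1) ^ K) ^ 2 :=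
        mul_le_mul_of_nonneg_left h2 (pow_nonneg hx0.le n)
    _ = (2 * ℓ : ℝ) ^ (2 * K) * (((n : ℝ) + 1) ^ (2 * K) * x ^ n) := by
        rw [mul_pow, ← pow_mul, ← pow_mul]
        ring

theorem symmetrized_binomial_series_identity (ℓ : ℕ) (hℓ : 1 ≤ ℓ) (x : ℝ) (hx0 : 0 < x)
    (hx1 : x < 1) :
    (2 * ∑' n : ℕ, x ^ (n + 1) *
        ∑ r ∈ Finset.range (n + 2), ∑ t ∈ Finset.range (n + 2),
          (if r + t < n + 1 then
            (Nat.choose (r + ℓ - 1) (ℓ - 1) : ℝ) * Nat.choose (n + 1 - r + ℓ - 1) (ℓ - 1)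
              * Nat.choose (t + ℓ - 1) (ℓ - 1) * Nat.choose (n + 1 - t + ℓ - 1) (ℓ - 1)
          else 0))
    + ∑' n : ℕ, x ^ n *
        ∑ r ∈ Finset.range (n + 1),
          (Nat.choose (r + ℓ - 1) (ℓ - 1) : ℝ) ^ 2 * (Nat.choose (n - r + ℓ - 1) (ℓ - 1) : ℝ) ^ 2
    = ∑' n : ℕ, x ^ n * (Nat.choose (n + 2 * ℓ - 1) (2 * ℓ - 1) : ℝ) ^ 2 := by
  set A : ℕ → ℝ := fun n => ∑ r ∈ Finset.range (n + 1), ∑ t ∈ Finset.range (n + 1),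
      (if r + t < n then
        (Nat.choose (r + ℓ - 1) (ℓ - 1) : ℝ) * Nat.choose (n - r + ℓ - 1) (ℓ - 1)
          * Nat.choose (t + ℓ - 1) (ℓ - 1) * Nat.choose (n - t + ℓ - 1) (ℓ - 1)
      else 0) with hA
  set D : ℕ → ℝ := fun n => ∑ r ∈ Finset.range (n + 1),
      (Nat.choose (r + ℓ - 1) (ℓ - 1) : ℝ) ^ 2 * (Nat.choose (n - r + ℓ - 1) (ℓ - 1) : ℝ) ^ 2
      with hD
  set C : ℕ → ℝ := fun n => ((n + 2 * ℓ - 1).choose (2 * ℓ - 1) : ℝ) with hC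
  have hterm : ∀ n, 2 * A n + D n = C n ^ 2 := fun n => termwise ℓ hℓ n
  have hApos : ∀ n, 0 ≤ A n := by
    intro n
    refine Finset.sum_nonneg fun r _ => Finset.sum_nonneg fun t _ => ?_
    split
    · positivity
    · exact le_refl 0
  have hDpos : ∀ n, 0 ≤ D n := by
    intro n
    exact Finset.sum_nonneg fun r _ => by positivity
  have hA0 : A 0 = 0 := by simp [hA]
  have sC : Summable fun n : ℕ => x ^ n * C n ^ 2 := summable_rhs ℓ hℓ x hx0 hx1
  have sg : Summable fun n : ℕ => x ^ n * (2 * A n) := by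
    refine Summable.of_nonneg_of_le (fun n => ?_) (fun n => ?_) sC
    · have := hApos n
      positivity
    · have h1 : 2 * A n ≤ C n ^ 2 := by
        have := hterm n
        have := hDpos n
        linarith
      exact mul_le_mul_of_nonneg_left h1 (pow_nonneg hx0.le n)
  have sD : Summable fun n : ℕ => x ^ n * D n := by
    refine Summable.of_nonneg_of_le (fun n => ?_) (fun n => ?_) sC
    · have := hDpos n
      positivity
    · have h1 : D n ≤ C n ^ 2 := by
        have := hterm n
        have := hApos n
        linarith
      exact mul_le_mul_of_nonneg_left h1 (pow_nonneg hx0.le n)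
  have step1 : (2 * ∑' n : ℕ, x ^ (n + 1) * A (n + 1)) = ∑' n : ℕ, x ^ (n + 1) * (2 * A (n + 1)) := by
    rw [← tsum_mul_left]
    exact tsum_congr fun n => by ring
  have step2 : (∑' n : ℕ, x ^ (n + 1) * (2 * A (n + 1))) = ∑' n : ℕ, x ^ n * (2 * A n) := by
    have := Summable.tsum_eq_zero_add sg
    rw [this, hA0]
    simp
  calc (2 * ∑' n : ℕ, x ^ (n + 1) * A (n + 1)) + ∑' n : ℕ, x ^ n * D n
      = (∑' n : ℕ, x ^ n * (2 * A n)) + ∑' n : ℕ, x ^ n * D n := by rw [step1, step2]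
    _ = ∑' n : ℕ, (x ^ n * (2 * A n) + x ^ n * D n) := (Summable.tsum_add sg sD).symm
    _ = ∑' n : ℕ, x ^ n * C n ^ 2 := tsum_congr fun n => by rw [← hterm n]; ring
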